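/- arXiv:1708.07967 — 4 statements merged into one kernel-verified Lean document; each statement's English description precedes it below -/
import Mathlib

section
/- The uniform distribution π̂ = 𝟙/vol(G) on directed edges is a stationary distribution of the begrudgingly-backtracking random walk: π̂ P̂ = π̂. -/
open Finset

/-- The directed edges of a simple graph (both orientations of each edge). -/
def DirEdge {V : Type*} (G : SimpleGraph V) := {p : V × V // G.Adj p.1 p.2}

instance {V : Type*} [Fintype V] [DecidableEq V] (G : SimpleGraph V)
    [DecidableRel G.Adj] : Fintype (DirEdge G) := Subtype.fintype _

/-- The begrudgingly-backtracking random-walk transition matrix on directed edges. -/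
noncomputable def bbtTransition {V : Type*} [Fintype V] [DecidableEq V] (G : SimpleGraph V)
    [DecidableRel G.Adj] (e f : DirEdge G) : ℝ :=
  if e.1.2 = f.1.1 ∧ f.1.2 ≠ e.1.1 then 1 / ((G.degree e.1.2 : ℝ) - 1)
  else if e.1.2 = f.1.1 ∧ f.1.2 = e.1.1 ∧ G.degree e.1.2 = 1 then 1
  else 0

lemma bbt_sum_one {V : Type*} [Fintype V] [DecidableEq V]
    (G : SimpleGraph V) [DecidableRel G.Adj] (f : DirEdge G) :
    ∑ e : DirEdge G, bbtTransition G e f = 1 := by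
  classical
  obtain ⟨⟨x, y⟩, hxy⟩ := f
  have hxy' : G.Adj x y := hxy
  set F : V × V → ℝ := fun p =>
    if p.2 = x ∧ y ≠ p.1 then 1 / ((G.degree p.2 : ℝ) - 1)
    else if p.2 = x ∧ y = p.1 ∧ G.degree p.2 = 1 then 1 else 0 with hF
  have h1 : ∀ e : DirEdge G, bbtTransition G e ⟨(x, y), hxy⟩ = F e.1 := by
    intro e; rfl
  simp only [h1]
  have h2 : ∑ e : DirEdge G, F e.1
      = ∑ p ∈ Finset.univ.filter (fun p : V × V => G.Adj p.1 p.2), F p :=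
    (Finset.sum_subtype _ (fun p => by simp) F).symm
  rw [h2, Finset.sum_filter]
  rw [Fintype.sum_prod_type]
  have h3 : ∀ u : V, (∑ v : V, if G.Adj u v then F (u, v) else 0)
      = if G.Adj u x then F (u, x) else 0 := by
    intro u
    apply Finset.sum_eq_single x
    · intro v _ hv
      have : F (u, v) = 0 := by
        simp only [hF]
        rw [if_neg (by tauto), if_neg (by tauto)]
      simp [this]
    · simp
  simp only [h3]
  have h4 : (∑ u : V, if G.Adj u x then F (u, x) else 0)
      = ∑ u ∈ G.neighborFinset x, F (u, x) := by
    rw [← Finset.sum_filter]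
    congr 1
    ext u
    simp [SimpleGraph.adj_comm]
  rw [h4]
  have hFux : ∀ u : V, F (u, x)
      = if y ≠ u then 1 / ((G.degree x : ℝ) - 1)
        else if G.degree x = 1 then 1 else 0 := by
    intro u; simp only [hF]
    by_cases h : y = u <;> simp [h]
  simp only [hFux]
  by_cases hd : G.degree x = 1
  · have hN : G.neighborFinset x = {y} := by
      apply Finset.eq_singleton_iff_unique_mem.mpr
      constructor
      · simpa using hxy'
      · intro u hu
        have hcard : (G.neighborFinset x).card = 1 := by
          rw [← SimpleGraph.card_neighborFinset_eq_degree] at hd; exact hd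
        obtain ⟨z, hz⟩ := Finset.card_eq_one.mp hcard
        have hy2 : y ∈ G.neighborFinset x := by simpa using hxy'
        rw [hz] at hu hy2
        simp at hu hy2; rw [hu, hy2]
    rw [hN]
    simp [hd]
  · have hy : y ∈ G.neighborFinset x := by simpa using hxy'
    have hdge : 2 ≤ G.degree x := by
      have h1' : 1 ≤ G.degree x := by
        rw [← SimpleGraph.card_neighborFinset_eq_degree]
        exact Finset.card_pos.mpr ⟨y, hy⟩
      omega
    have hsum : ∀ u ∈ G.neighborFinset x,
        (if y ≠ u then 1 / ((G.degree x : ℝ) - 1) else if G.degree x = 1 then 1 else 0)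
        = if u = y then 0 else 1 / ((G.degree x : ℝ) - 1) := by
      intro u _
      by_cases h : u = y <;> simp [h, hd, Ne.symm]
    rw [Finset.sum_congr rfl hsum]
    rw [← Finset.sum_erase (f := fun u => if u = y then (0:ℝ) else 1 / ((G.degree x : ℝ) - 1)) (a := y)
      (G.neighborFinset x) (by simp)]
    rw [Finset.sum_congr rfl (fun u hu => if_neg (Finset.ne_of_mem_erase hu))]
    rw [Finset.sum_const, Finset.card_erase_of_mem hy,
      SimpleGraph.card_neighborFinset_eq_degree, nsmul_eq_mul]
    have hne : ((G.degree x : ℝ) - 1) ≠ 0 := by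
      have : (2:ℝ) ≤ (G.degree x : ℝ) := by exact_mod_cast hdge
      linarith
    rw [Nat.cast_sub (by omega), Nat.cast_one]
    field_simp

/-- The uniform distribution `1/(2m) = 1/vol(G)` on directed edges is stationary
for the begrudgingly-backtracking random walk. -/
theorem bbt_uniform_stationary {V : Type*} [Fintype V] [DecidableEq V]
    (G : SimpleGraph V) [DecidableRel G.Adj]
    (hconn : G.Connected) (hdeg : ∀ v : V, 1 ≤ G.degree v) :
    ∀ f : DirEdge G,
      ∑ e : DirEdge G, (1 / (2 * (G.edgeFinset.card : ℝ))) * bbtTransition G e f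
        = 1 / (2 * (G.edgeFinset.card : ℝ)) := by
  intro f
  rw [← Finset.mul_sum, bbt_sum_one, mul_one]
end

section
/- For a d-regular graph with d ≥ 2 and any real λ with 2√(d−1) ≤ λ ≤ d, the ratio ρ̃/ρ satisfies d/(2(d−1)) ≤ ρ̃/ρ ≤ 1, where ρ = λ/d and ρ̃ = (λ + √(λ² − 4(d−1)))/(2(d−1)). -/
theorem mixing_rate_ratio_bounds (d : ℕ) (hd : 2 ≤ d) (lam : ℝ)
    (hlow : 2 * Real.sqrt (d - 1) ≤ lam) (hhigh : lam ≤ d)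
    (ρ ρt : ℝ) (hρ : ρ = lam / d)
    (hρt : ρt = (lam + Real.sqrt (lam ^ 2 - 4 * (d - 1))) / (2 * (d - 1))) :
    (d : ℝ) / (2 * (d - 1)) ≤ ρt / ρ ∧ ρt / ρ ≤ 1 := by
  have hd2 : (2:ℝ) ≤ (d:ℝ) := by exact_mod_cast hd
  have hd1 : (1:ℝ) ≤ (d:ℝ) - 1 := by linarith
  have hsq1 : (1:ℝ) ≤ Real.sqrt ((d:ℝ) - 1) := by
    nlinarith [Real.sq_sqrt (show (0:ℝ) ≤ (d:ℝ)-1 by linarith), Real.sqrt_nonneg ((d:ℝ)-1)]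
  have hlam : (2:ℝ) ≤ lam := by nlinarith
  have hlam0 : (0:ℝ) < lam := by linarith
  have hsd : Real.sqrt ((d:ℝ) - 1) ^ 2 = (d:ℝ) - 1 := Real.sq_sqrt (by linarith)
  have hnn : (0:ℝ) ≤ lam ^ 2 - 4 * ((d:ℝ) - 1) := by nlinarith [Real.sqrt_nonneg ((d:ℝ)-1)]
  set s := Real.sqrt (lam ^ 2 - 4 * ((d:ℝ) - 1)) with hs
  have hs0 : 0 ≤ s := Real.sqrt_nonneg _
  have hs2 : s ^ 2 = lam ^ 2 - 4 * ((d:ℝ) - 1) := Real.sq_sqrt hnn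
  have hden : (0:ℝ) < 2 * ((d:ℝ) - 1) := by linarith
  have hq : ρt / ρ = ((d:ℝ) * (lam + s)) / (2 * ((d:ℝ) - 1) * lam) := by
    rw [hρ, hρt]
    field_simp
  have hdenl : (0:ℝ) < 2 * ((d:ℝ) - 1) * lam := by positivity
  constructor
  · rw [hq, div_le_div_iff₀ hden hdenl]
    nlinarith [mul_nonneg (mul_nonneg (show (0:ℝ) ≤ (d:ℝ) by linarith) hden.le) hs0]
  · rw [hq, div_le_one hdenl]
    -- need d*(lam+s) ≤ 2*(d-1)*lam, i.e. d*s ≤ (d-2)*lam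
    have hsqle : ((d:ℝ) * s)^2 ≤ (((d:ℝ) - 2) * lam)^2 := by
      have he : ((d:ℝ)*s)^2 = (d:ℝ)^2 * (lam^2 - 4*((d:ℝ)-1)) := by rw [mul_pow, hs2]
      nlinarith [he, mul_nonneg (show (0:ℝ) ≤ (d:ℝ)-1 by linarith) (mul_nonneg (sub_nonneg.2 hhigh) (show (0:ℝ) ≤ (d:ℝ)+lam by linarith))]
    have hkey : (d:ℝ) * s ≤ ((d:ℝ) - 2) * lam := by
      have h1 : (0:ℝ) ≤ (d:ℝ) * s := mul_nonneg (by linarith) hs0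
      have h2 : (0:ℝ) ≤ ((d:ℝ) - 2) * lam := mul_nonneg (by linarith) hlam0.le
      exact (pow_le_pow_iff_left₀ h1 h2 (by norm_num)).mp hsqle
    linarith [mul_le_mul_of_nonneg_left hkey (le_of_lt hlam0)]
end

section
/- For a d-regular graph with d ≥ 2 and second adjacency eigenvalue λ satisfying 2√(d−1) ≤ λ ≤ d, the non-backtracking mixing rate ρ̃ = (λ + √(λ² − 4(d−1)))/(2(d−1)) is at most the simple random walk mixing rate ρ = λ/d. -/
theorem nbt_mixing_rate_le (d : ℕ) (hd : 2 ≤ d) (lam : ℝ)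
    (hlow : 2 * Real.sqrt (d - 1) ≤ lam) (hhigh : lam ≤ d) :
    (lam + Real.sqrt (lam ^ 2 - 4 * (d - 1))) / (2 * (d - 1)) ≤ lam / d := by
  have hd2 : (2:ℝ) ≤ (d:ℝ) := by exact_mod_cast hd
  have hd1 : (1:ℝ) ≤ (d:ℝ) - 1 := by linarith
  have hs1 : (1:ℝ) ≤ Real.sqrt ((d:ℝ) - 1) := by
    have := Real.sqrt_le_sqrt (show (1:ℝ) ≤ (d:ℝ) - 1 by linarith)
    simpa using this
  have hlam : (2:ℝ) ≤ lam := by nlinarith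
  have hkey : Real.sqrt (lam ^ 2 - 4 * ((d:ℝ) - 1)) ≤ lam * ((d:ℝ) - 2) / d := by
    rw [show lam * ((d:ℝ) - 2) / d = Real.sqrt ((lam * ((d:ℝ) - 2) / d) ^ 2) from
      (Real.sqrt_sq (by apply div_nonneg; nlinarith; linarith)).symm]
    apply Real.sqrt_le_sqrt
    rw [div_pow, le_div_iff₀ (by positivity)]
    nlinarith [mul_nonneg (mul_nonneg (sub_nonneg.2 hhigh) (by linarith : (0:ℝ) ≤ (d:ℝ) + lam)) (by linarith : (0:ℝ) ≤ (d:ℝ) - 1)]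
  rw [div_le_div_iff₀ (by linarith) (by linarith)]
  have := mul_le_mul_of_nonneg_right hkey (by linarith : (0:ℝ) ≤ (d:ℝ))
  rw [div_mul_cancel₀ _ (by linarith : (d:ℝ) ≠ 0)] at this
  nlinarith
end

section
/- If G is a connected graph with minimum degree ≥ 2 that is not a cycle, then the non-backtracking walk's directed-edge Markov chain with transition matrix P̃ is irreducible. -/
open Finset

instance {V : Type*} [DecidableEq V] (G : SimpleGraph V) :
    DecidableEq (DirEdge G) := Subtype.instDecidableEq

/-- The non-backtracking random-walk transition matrix on directed edges. -/
noncomputable def nbtTransition {V : Type*} [Fintype V] [DecidableEq V] (G : SimpleGraph V)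
    [DecidableRel G.Adj] : Matrix (DirEdge G) (DirEdge G) ℝ := fun e f =>
  if e.1.2 = f.1.1 ∧ f.1.2 ≠ e.1.1 then 1 / ((G.degree e.1.2 : ℝ) - 1) else 0

section NBT

open Relation

variable {V : Type*} [Fintype V] [DecidableEq V] {G : SimpleGraph V} [DecidableRel G.Adj]

/-- One allowed non-backtracking step between directed edges. -/
def nbtStep (G : SimpleGraph V) (e f : DirEdge G) : Prop :=
  e.1.2 = f.1.1 ∧ f.1.2 ≠ e.1.1

/-- The reversal of a directed edge. -/
def nbtRev (G : SimpleGraph V) (e : DirEdge G) : DirEdge G := ⟨(e.1.2, e.1.1), e.2.symm⟩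

lemma nbtRev_rev (e : DirEdge G) : nbtRev G (nbtRev G e) = e := rfl

lemma nbtStep_irrefl (e : DirEdge G) : ¬ nbtStep G e e := fun h => h.2 h.1

lemma nbtStep_rev {e f : DirEdge G} (h : nbtStep G e f) :
    nbtStep G (nbtRev G f) (nbtRev G e) := ⟨h.1.symm, h.2.symm⟩

lemma rreach_rev {e f : DirEdge G} (h : ReflTransGen (nbtStep G) e f) :
    ReflTransGen (nbtStep G) (nbtRev G f) (nbtRev G e) := by
  induction h with
  | refl => exact .refl
  | tail _ hstep ih => exact ReflTransGen.head (nbtStep_rev hstep) ih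

lemma exists_nbt_succ (hdeg : ∀ v : V, 2 ≤ G.degree v) (e : DirEdge G) :
    ∃ f : DirEdge G, nbtStep G e f := by
  obtain ⟨⟨a, b⟩, hab⟩ := e
  have hb : a ∈ G.neighborFinset b := by
    rw [SimpleGraph.mem_neighborFinset]; exact hab.symm
  have hcard : 1 ≤ ((G.neighborFinset b).erase a).card := by
    rw [Finset.card_erase_of_mem hb]
    have := hdeg b
    rw [← SimpleGraph.card_neighborFinset_eq_degree] at this
    omega
  obtain ⟨c, hc⟩ := Finset.card_pos.mp hcard
  have hcb : G.Adj b c := by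
    have := Finset.mem_of_mem_erase hc
    rwa [SimpleGraph.mem_neighborFinset] at this
  exact ⟨⟨(b, c), hcb⟩, rfl, Finset.ne_of_mem_erase hc⟩

/-- A set of directed edges closed under non-backtracking steps. -/
def NbtClosed (G : SimpleGraph V) (C : Finset (DirEdge G)) : Prop :=
  ∀ e ∈ C, ∀ f, nbtStep G e f → f ∈ C

lemma mem_of_rreach {C : Finset (DirEdge G)} (hC : NbtClosed G C) {e f : DirEdge G}
    (he : e ∈ C) (h : ReflTransGen (nbtStep G) e f) : f ∈ C := by
  induction h with
  | refl => exact he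
  | tail _ hstep ih => exact hC _ ih _ hstep

lemma exists_minimal_closed :
    ∀ C₀ : Finset (DirEdge G), NbtClosed G C₀ → C₀.Nonempty →
      ∃ C, C ⊆ C₀ ∧ NbtClosed G C ∧ C.Nonempty ∧
        ∀ C' ⊆ C, NbtClosed G C' → C'.Nonempty → C' = C := by
  intro C₀
  induction C₀ using Finset.strongInductionOn with
  | _ C₀ ih =>
    intro h1 h2
    by_cases h : ∀ C' ⊆ C₀, NbtClosed G C' → C'.Nonempty → C' = C₀
    · exact ⟨C₀, Finset.Subset.refl _, h1, h2, h⟩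
    · push_neg at h
      obtain ⟨C', hsub, hcl, hne, hne2⟩ := h
      obtain ⟨C, ha, hb, hc, hd⟩ :=
        ih C' (Finset.ssubset_iff_subset_ne.mpr ⟨hsub, hne2⟩) hcl hne
      exact ⟨C, ha.trans hsub, hb, hc, hd⟩

section Minimal

variable {C : Finset (DirEdge G)} (hcl : NbtClosed G C)
  (hmin : ∀ C' ⊆ C, NbtClosed G C' → C'.Nonempty → C' = C)

include hcl hmin in
lemma min_mutual {f : DirEdge G} (hf : f ∈ C) :
    ∀ g ∈ C, ReflTransGen (nbtStep G) f g := by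
  classical
  set D : Finset (DirEdge G) := C.filter (fun h => ReflTransGen (nbtStep G) f h) with hD
  have hDsub : D ⊆ C := Finset.filter_subset _ _
  have hDcl : NbtClosed G D := by
    intro e he g hg
    rw [hD, Finset.mem_filter] at he ⊢
    exact ⟨hcl _ he.1 _ hg, he.2.tail hg⟩
  have hDne : D.Nonempty := ⟨f, by rw [hD, Finset.mem_filter]; exact ⟨hf, .refl⟩⟩
  have hDC := hmin D hDsub hDcl hDne
  intro g hg
  rw [← hDC, hD, Finset.mem_filter] at hg
  exact hg.2

include hcl hmin in
lemma min_pred (hdeg : ∀ v : V, 2 ≤ G.degree v) {f : DirEdge G} (hf : f ∈ C) :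
    ∃ g ∈ C, nbtStep G g f := by
  obtain ⟨f', hf'⟩ := exists_nbt_succ hdeg f
  have hf'C : f' ∈ C := hcl _ hf _ hf'
  have hff' : f' ≠ f := by rintro rfl; exact nbtStep_irrefl _ hf'
  have hr : ReflTransGen (nbtStep G) f' f := min_mutual hcl hmin hf'C _ hf
  have ht : TransGen (nbtStep G) f' f := by
    rcases (Relation.reflTransGen_iff_eq_or_transGen).mp hr with h | h
    · exact absurd h.symm hff'
    · exact h
  obtain ⟨g, hg1, hg2⟩ := (Relation.TransGen.tail'_iff).mp ht
  exact ⟨g, mem_of_rreach hcl hf'C hg1, hg2⟩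

include hcl hmin in
lemma min_inn_all (hconn : G.Connected) (hdeg : ∀ v : V, 2 ≤ G.degree v)
    (hne : C.Nonempty) (x : V) : ∃ g ∈ C, g.1.2 = x := by
  set P : V → Prop := fun x => ∃ g ∈ C, g.1.2 = x with hP
  have hadj : ∀ a b : V, G.Adj a b → P a → P b := by
    rintro a b hab ⟨g, hgC, hga⟩
    by_cases hb : b = g.1.1
    · obtain ⟨g', hg'C, hg'⟩ := min_pred hcl hmin hdeg hgC
      exact ⟨g', hg'C, by rw [hg'.1, ← hb]⟩
    · have hadj' : G.Adj a b := hab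
      exact ⟨⟨(a, b), hga ▸ hadj'⟩, hcl _ hgC _ ⟨hga, hb⟩, rfl⟩
  obtain ⟨f, hf⟩ := hne
  have base : P f.1.2 := ⟨f, hf, rfl⟩
  have hwalk : ∀ {u v : V}, G.Walk u v → P u → P v := by
    intro u v p
    induction p with
    | nil => exact id
    | cons h _ ih => exact fun hu => ih (hadj _ _ h hu)
  obtain ⟨p⟩ := hconn.preconnected f.1.2 x
  exact hwalk p base

include hcl hmin in
lemma min_rev_pair (hconn : G.Connected) (hdeg : ∀ v : V, 2 ≤ G.degree v)
    (hnotcycle : ¬ ∀ v : V, G.degree v = 2) (hne : C.Nonempty) :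
    ∃ g ∈ C, nbtRev G g ∈ C := by
  classical
  by_contra Hno
  push_neg at Hno
  have hA : ∀ x : V, (C.filter (fun g => g.1.2 = x)).card = 1 := by
    intro x
    obtain ⟨g, hgC, hgx⟩ := min_inn_all hcl hmin hconn hdeg hne x
    rw [Finset.card_eq_one]
    refine ⟨g, Finset.eq_singleton_iff_unique_mem.mpr
      ⟨Finset.mem_filter.mpr ⟨hgC, hgx⟩, ?_⟩⟩
    rintro g' hg'
    rw [Finset.mem_filter] at hg'
    obtain ⟨hg'C, hg'x⟩ := hg'
    by_cases hdd : g'.1.1 = g.1.1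
    · exact Subtype.ext (Prod.ext hdd (hg'x.trans hgx.symm))
    · exfalso
      have hstep : nbtStep G g' (nbtRev G g) :=
        ⟨by show g'.1.2 = g.1.2; rw [hg'x, hgx],
         by show g.1.1 ≠ g'.1.1; exact fun h => hdd h.symm⟩
      exact Hno g hgC (hcl _ hg'C _ hstep)
  have hB : ∀ x : V, (C.filter (fun g => g.1.1 = x)).card = G.degree x - 1 := by
    intro x
    obtain ⟨g, hgC, hgx⟩ := min_inn_all hcl hmin hconn hdeg hne x
    have hdadj : G.Adj g.1.1 x := hgx ▸ g.2
    have hdmem : g.1.1 ∈ G.neighborFinset x := by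
      rw [SimpleGraph.mem_neighborFinset]; exact hdadj.symm
    have hcard : ((G.neighborFinset x).erase g.1.1).card = G.degree x - 1 := by
      rw [Finset.card_erase_of_mem hdmem, SimpleGraph.card_neighborFinset_eq_degree]
    rw [← hcard]
    apply Finset.card_bij (fun h _ => h.1.2)
    · intro h hh
      rw [Finset.mem_filter] at hh
      obtain ⟨hhC, hhx⟩ := hh
      rw [Finset.mem_erase, SimpleGraph.mem_neighborFinset]
      refine ⟨?_, hhx ▸ h.2⟩
      intro heq
      apply Hno g hgC
      have heqr : h = nbtRev G g :=
        Subtype.ext (Prod.ext (hhx.trans hgx.symm) heq)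
      exact heqr ▸ hhC
    · intro h1 hh1 h2 hh2 heq
      rw [Finset.mem_filter] at hh1 hh2
      exact Subtype.ext (Prod.ext (hh1.2.trans hh2.2.symm) heq)
    · intro y hy
      rw [Finset.mem_erase, SimpleGraph.mem_neighborFinset] at hy
      exact ⟨⟨(x, y), hy.2⟩, Finset.mem_filter.mpr
        ⟨hcl _ hgC _ ⟨hgx, hy.1⟩, rfl⟩, rfl⟩
  have hsum1 : C.card = Fintype.card V := by
    rw [Finset.card_eq_sum_card_fiberwise
      (f := fun g : DirEdge G => g.1.2) (t := Finset.univ) (fun a _ => Finset.mem_univ _)]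
    rw [Finset.sum_congr rfl (fun x _ => hA x)]
    simp
  have hsum2 : C.card = ∑ x : V, (G.degree x - 1) := by
    rw [Finset.card_eq_sum_card_fiberwise
      (f := fun g : DirEdge G => g.1.1) (t := Finset.univ) (fun a _ => Finset.mem_univ _)]
    exact Finset.sum_congr rfl (fun x _ => hB x)
  push_neg at hnotcycle
  obtain ⟨v₀, hv₀⟩ := hnotcycle
  have hlt : ∑ _x : V, 1 < ∑ x : V, (G.degree x - 1) := by
    apply Finset.sum_lt_sum
    · intro i _; have := hdeg i; omega
    · exact ⟨v₀, Finset.mem_univ _, by have h1 := hdeg v₀; omega⟩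
  rw [← hsum2, hsum1] at hlt
  simp only [Finset.sum_const, smul_eq_mul, mul_one, Finset.card_univ] at hlt
  exact lt_irrefl _ hlt

end Minimal

/-- Key lemma: every directed edge can reach its own reversal. -/
lemma reach_rev (hconn : G.Connected) (hdeg : ∀ v : V, 2 ≤ G.degree v)
    (hnotcycle : ¬ ∀ v : V, G.degree v = 2) (e : DirEdge G) :
    TransGen (nbtStep G) e (nbtRev G e) := by
  classical
  set C₀ : Finset (DirEdge G) :=
    Finset.univ.filter (fun f => ReflTransGen (nbtStep G) e f) with hC₀
  have hcl₀ : NbtClosed G C₀ := by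
    intro a ha f hf
    rw [hC₀, Finset.mem_filter] at ha ⊢
    exact ⟨Finset.mem_univ _, ha.2.tail hf⟩
  have hne₀ : C₀.Nonempty :=
    ⟨e, by rw [hC₀, Finset.mem_filter]; exact ⟨Finset.mem_univ _, .refl⟩⟩
  obtain ⟨C, hsub, hcl, hne, hmin⟩ := exists_minimal_closed C₀ hcl₀ hne₀
  obtain ⟨g, hgC, hrgC⟩ := min_rev_pair hcl hmin hconn hdeg hnotcycle hne
  have h1 : ReflTransGen (nbtStep G) e g := by
    have hmem := hsub hgC; rw [hC₀, Finset.mem_filter] at hmem; exact hmem.2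
  have h2 : ReflTransGen (nbtStep G) g (nbtRev G g) :=
    min_mutual hcl hmin hgC _ hrgC
  have hgne : nbtRev G g ≠ g := by
    intro h
    have h11 : g.1.1 = g.1.2 := (congrArg (fun p => p.1.2) h)
    exact g.2.ne h11
  have h2' : TransGen (nbtStep G) g (nbtRev G g) := by
    rcases (Relation.reflTransGen_iff_eq_or_transGen).mp h2 with h | h
    · exact absurd h hgne
    · exact h
  have h3 : ReflTransGen (nbtStep G) (nbtRev G g) (nbtRev G e) := rreach_rev h1
  exact (Relation.TransGen.trans_right h1 h2').trans_left h3

lemma step_any (hconn : G.Connected) (hdeg : ∀ v : V, 2 ≤ G.degree v)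
    (hnotcycle : ¬ ∀ v : V, G.degree v = 2) (e : DirEdge G) {c : V}
    (h : G.Adj e.1.2 c) : TransGen (nbtStep G) e ⟨(e.1.2, c), h⟩ := by
  by_cases hc : c = e.1.1
  · have heq : (⟨(e.1.2, c), h⟩ : DirEdge G) = nbtRev G e :=
      Subtype.ext (Prod.ext rfl hc)
    rw [heq]
    exact reach_rev hconn hdeg hnotcycle e
  · exact TransGen.single ⟨rfl, hc⟩

lemma trav (hconn : G.Connected) (hdeg : ∀ v : V, 2 ≤ G.degree v)
    (hnotcycle : ¬ ∀ v : V, G.degree v = 2) :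
    ∀ {u z : V} (_ : G.Walk u z) (e : DirEdge G), e.1.2 = u →
      ∀ {y : V} (h : G.Adj z y), TransGen (nbtStep G) e ⟨(z, y), h⟩ := by
  intro u z p
  induction p with
  | nil =>
    intro e he y h
    subst he
    exact step_any hconn hdeg hnotcycle e h
  | @cons u w z hadj q ih =>
    intro e he y h
    subst he
    exact (step_any hconn hdeg hnotcycle e hadj).trans (ih ⟨(e.1.2, w), hadj⟩ rfl h)

/-- Full combinatorial reachability. -/
lemma reach_all (hconn : G.Connected) (hdeg : ∀ v : V, 2 ≤ G.degree v)
    (hnotcycle : ¬ ∀ v : V, G.degree v = 2) (e f : DirEdge G) :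
    TransGen (nbtStep G) e f := by
  obtain ⟨⟨x, y⟩, hxy⟩ := f
  obtain ⟨p⟩ := hconn.preconnected e.1.2 x
  exact trav hconn hdeg hnotcycle p e rfl hxy

lemma nbt_entry_nonneg (hdeg : ∀ v : V, 2 ≤ G.degree v) (e f : DirEdge G) :
    0 ≤ nbtTransition G e f := by
  unfold nbtTransition
  split
  · have h2 : (2 : ℝ) ≤ (G.degree e.1.2 : ℝ) := by exact_mod_cast hdeg e.1.2
    have h3 : (0 : ℝ) < (G.degree e.1.2 : ℝ) - 1 := by linarith
    positivity
  · exact le_refl 0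

lemma nbt_entry_pos (hdeg : ∀ v : V, 2 ≤ G.degree v) {e f : DirEdge G}
    (h : nbtStep G e f) : 0 < nbtTransition G e f := by
  have h' : e.1.2 = f.1.1 ∧ f.1.2 ≠ e.1.1 := h
  unfold nbtTransition
  rw [if_pos h']
  have h2 : (2 : ℝ) ≤ (G.degree e.1.2 : ℝ) := by exact_mod_cast hdeg e.1.2
  have : (0 : ℝ) < (G.degree e.1.2 : ℝ) - 1 := by linarith
  positivity

lemma nbt_pow_nonneg (hdeg : ∀ v : V, 2 ≤ G.degree v) (t : ℕ) (e f : DirEdge G) :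
    0 ≤ (nbtTransition G ^ t) e f := by
  induction t generalizing e f with
  | zero =>
    simp only [pow_zero, Matrix.one_apply]
    split <;> norm_num
  | succ t ih =>
    rw [pow_succ, Matrix.mul_apply]
    exact Finset.sum_nonneg fun g _ => mul_nonneg (ih e g) (nbt_entry_nonneg hdeg g f)

lemma nbt_reach_pos (hdeg : ∀ v : V, 2 ≤ G.degree v) {e f : DirEdge G}
    (h : TransGen (nbtStep G) e f) :
    ∃ t : ℕ, 1 ≤ t ∧ 0 < (nbtTransition G ^ t) e f := by
  induction h with
  | single hs => exact ⟨1, le_refl _, by rw [pow_one]; exact nbt_entry_pos hdeg hs⟩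
  | @tail b c hab hs ih =>
    obtain ⟨t, ht, hpos⟩ := ih
    refine ⟨t + 1, by omega, ?_⟩
    rw [pow_succ, Matrix.mul_apply]
    refine Finset.sum_pos' (fun g _ => mul_nonneg (nbt_pow_nonneg hdeg t e g)
      (nbt_entry_nonneg hdeg g c)) ?_
    exact ⟨b, Finset.mem_univ _, mul_pos hpos (nbt_entry_pos hdeg hs)⟩

end NBT

/-- If `G` is connected with minimum degree `≥ 2` and is not a cycle (i.e. not
every vertex has degree exactly `2`), then the non-backtracking directed-edge
Markov chain is irreducible. -/
theorem nbt_irreducible {V : Type*} [Fintype V] [DecidableEq V]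
    (G : SimpleGraph V) [DecidableRel G.Adj]
    (hconn : G.Connected) (hdeg : ∀ v : V, 2 ≤ G.degree v)
    (hnotcycle : ¬ ∀ v : V, G.degree v = 2) :
    ∀ e f : DirEdge G, ∃ t : ℕ, 1 ≤ t ∧ 0 < (nbtTransition G ^ t) e f := by
  intro e f
  exact nbt_reach_pos hdeg (reach_all hconn hdeg hnotcycle e f)
end
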